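/- Let Φ be a complex-linear map from the n×n complex matrices to the m×m complex matrices such that Φ(1) = 1 and Φ maps positive semidefinite matrices to positive semidefinite matrices. Let η : ℝ → ℝ be η(t) = −t log t (with η(0) = 0), applied to positive semidefinite matrices via the spectral decomposition. Then for every positive semidefinite n×n matrix x, Φ(η(x)) ≤ η(Φ(x)), where ≤ is the Loewner order (a ≤ b iff b − a is positive semidefinite). -/

import Mathlib

open scoped ComplexOrder

/-- The entropy function `η(t) = −t log t` (with `η(0) = 0`). -/
noncomputable def eta (t : ℝ) : ℝ := -(t * Real.log t)

/-- Apply a real function to a Hermitian matrix via the spectral decomposition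
(junk value `0` for non-Hermitian matrices). -/
noncomputable def matFun {n : Type*} [Fintype n] [DecidableEq n]
    (f : ℝ → ℝ) (A : Matrix n n ℂ) : Matrix n n ℂ :=
  if hA : A.IsHermitian then hA.cfc f else 0

namespace EtaJensen

open MeasureTheory Set Filter Topology in
lemma eta_repr {t : ℝ} (ht : 0 ≤ t) :
    IntegrableOn (fun s => t/(t+s) - t/(1+s)) (Ioi (0:ℝ)) ∧
      ∫ s in Ioi (0:ℝ), (t/(t+s) - t/(1+s)) = eta t := by
  rcases ht.eq_or_lt with rfl | ht
  · simp [eta, integrableOn_const]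
  · set g : ℝ → ℝ := fun s => t * (Real.log (t+s) - Real.log (1+s)) with hg
    have hderiv : ∀ s ∈ Ici (0:ℝ), HasDerivAt g (t/(t+s) - t/(1+s)) s := by
      intro s hs
      have hs0 : (0:ℝ) ≤ s := hs
      have h1 : HasDerivAt (fun s : ℝ => Real.log (t+s)) (1/(t+s)) s := by
        have := ((hasDerivAt_id s).const_add t).log (by positivity)
        simpa using this
      have h2 : HasDerivAt (fun s : ℝ => Real.log (1+s)) (1/(1+s)) s := by
        have := ((hasDerivAt_id s).const_add 1).log (by positivity)
        simpa using this
      have := ((h1.sub h2).const_mul t)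
      exact this.congr_deriv (by ring)
    have htends : Tendsto g atTop (𝓝 0) := by
      have h0 : Tendsto (fun s : ℝ => (t-1)/(1+s)) atTop (𝓝 0) :=
        Tendsto.div_atTop tendsto_const_nhds
          (tendsto_atTop_add_const_left _ 1 tendsto_id)
      have h1 : Tendsto (fun s : ℝ => (t+s)/(1+s)) atTop (𝓝 1) := by
        have := tendsto_const_nhds.add h0 (a := (1:ℝ))
        rw [add_zero] at this
        refine this.congr' ?_
        filter_upwards [eventually_gt_atTop 0] with s hs
        have : (1:ℝ)+s ≠ 0 := by positivity
        field_simp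
        linarith
      have h2 : Tendsto (fun s : ℝ => Real.log ((t+s)/(1+s))) atTop (𝓝 0) := by
        have := (Real.continuousAt_log one_ne_zero).tendsto.comp h1
        simpa [Function.comp_def] using this
      have h3 := h2.const_mul t
      rw [mul_zero] at h3
      refine h3.congr' ?_
      filter_upwards [eventually_gt_atTop 0] with s hs
      rw [Real.log_div (by positivity) (by positivity)]
    have hint : IntegrableOn (fun s => t/(t+s) - t/(1+s)) (Ioi (0:ℝ)) := by
      rcases le_total t 1 with h | h
      · refine integrableOn_Ioi_deriv_of_nonneg' hderiv (fun s hs => ?_) htends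
        have hs : (0:ℝ) < s := hs
        have : t/(1+s) ≤ t/(t+s) :=
          div_le_div_of_nonneg_left ht.le (by positivity) (by linarith)
        linarith
      · refine integrableOn_Ioi_deriv_of_nonpos' hderiv (fun s hs => ?_) htends
        have hs : (0:ℝ) < s := hs
        have : t/(t+s) ≤ t/(1+s) :=
          div_le_div_of_nonneg_left ht.le (by positivity) (by linarith)
        linarith
    refine ⟨hint, ?_⟩
    rw [integral_Ioi_of_hasDerivAt_of_tendsto' hderiv hint htends]
    simp [hg, eta]

open MeasureTheory Set Filter Topology in
lemma scalar_key {ι κ : Type*} [Fintype ι] [Fintype κ]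
    (b lam : ι → ℝ) (qv nu : κ → ℝ)
    (hlam : ∀ i, 0 ≤ lam i) (hnu : ∀ j, 0 ≤ nu j)
    (h1 : ∑ i, b i = ∑ j, qv j)
    (h2 : ∑ i, lam i * b i = ∑ j, nu j * qv j)
    (hkey : ∀ s : ℝ, 0 < s → ∑ j, qv j / (nu j + s) ≤ ∑ i, b i / (lam i + s)) :
    ∑ i, eta (lam i) * b i ≤ ∑ j, eta (nu j) * qv j := by
  classical
  set F : ℝ → ℝ → ℝ := fun t s => t/(t+s) - t/(1+s) with hF
  have hInt : ∀ t, 0 ≤ t → IntegrableOn (fun s => F t s) (Ioi (0:ℝ)) :=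
    fun t ht => (eta_repr ht).1
  have hVal : ∀ t, 0 ≤ t → ∫ s in Ioi (0:ℝ), F t s = eta t := fun t ht => (eta_repr ht).2
  set φ : ℝ → ℝ := fun s => (∑ j, qv j * F (nu j) s) - (∑ i, b i * F (lam i) s) with hφ
  have hint1 : IntegrableOn (fun s => ∑ j, qv j * F (nu j) s) (Ioi (0:ℝ)) :=
    integrable_finset_sum _ fun j _ => (hInt _ (hnu j)).const_mul _
  have hint2 : IntegrableOn (fun s => ∑ i, b i * F (lam i) s) (Ioi (0:ℝ)) :=
    integrable_finset_sum _ fun i _ => (hInt _ (hlam i)).const_mul _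
  have hφint : IntegrableOn φ (Ioi (0:ℝ)) := hint1.sub hint2
  have hφval : ∫ s in Ioi (0:ℝ), φ s
      = (∑ j, qv j * eta (nu j)) - ∑ i, b i * eta (lam i) := by
    rw [hφ]
    rw [integral_sub hint1 hint2, integral_finset_sum _ fun j _ => (hInt _ (hnu j)).const_mul _,
      integral_finset_sum _ fun i _ => (hInt _ (hlam i)).const_mul _]
    congr 1
    · exact Finset.sum_congr rfl fun j _ => by
        rw [MeasureTheory.integral_const_mul, hVal _ (hnu j)]
    · exact Finset.sum_congr rfl fun i _ => by
        rw [MeasureTheory.integral_const_mul, hVal _ (hlam i)]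
  have hφnonneg : ∀ s ∈ Ioi (0:ℝ), 0 ≤ φ s := by
    intro s hs
    have hs : (0:ℝ) < s := hs
    have key := hkey s hs
    have expand : ∀ t w : ℝ, 0 ≤ t →
        w * F t s = w - s * (w/(t+s)) - (t*w)/(1+s) := by
      intro t w ht
      have h1 : t + s ≠ 0 := by positivity
      have h2 : (1:ℝ) + s ≠ 0 := by positivity
      simp only [hF]
      field_simp
      ring
    have e1 : ∑ j, qv j * F (nu j) s
        = (∑ j, qv j) - s * (∑ j, qv j/(nu j + s)) - (∑ j, nu j * qv j)/(1+s) := by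
      rw [Finset.mul_sum, Finset.sum_div, ← Finset.sum_sub_distrib, ← Finset.sum_sub_distrib]
      exact Finset.sum_congr rfl fun j _ => expand _ _ (hnu j)
    have e2 : ∑ i, b i * F (lam i) s
        = (∑ i, b i) - s * (∑ i, b i/(lam i + s)) - (∑ i, lam i * b i)/(1+s) := by
      rw [Finset.mul_sum, Finset.sum_div, ← Finset.sum_sub_distrib, ← Finset.sum_sub_distrib]
      exact Finset.sum_congr rfl fun i _ => expand _ _ (hlam i)
    have hmul := mul_le_mul_of_nonneg_left key hs.le
    simp only [hφ]
    rw [e1, e2, h1, h2]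
    linarith
  have h0 : 0 ≤ ∫ s in Ioi (0:ℝ), φ s := setIntegral_nonneg measurableSet_Ioi hφnonneg
  rw [hφval] at h0
  have : ∑ i, b i * eta (lam i) ≤ ∑ j, qv j * eta (nu j) := by linarith
  calc ∑ i, eta (lam i) * b i = ∑ i, b i * eta (lam i) := by simp [mul_comm]
    _ ≤ ∑ j, qv j * eta (nu j) := this
    _ = ∑ j, eta (nu j) * qv j := by simp [mul_comm]

open Matrix

variable {n : Type*} [Fintype n] [DecidableEq n] {A : Matrix n n ℂ}

/-- The rank-one spectral projection onto the `j`-th eigenvector. -/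
noncomputable def sproj (hA : A.IsHermitian) (j : n) : Matrix n n ℂ :=
  Matrix.of fun k l => (hA.eigenvectorUnitary : Matrix n n ℂ) k j *
    star ((hA.eigenvectorUnitary : Matrix n n ℂ) l j)

lemma conj_diag_eq_sum (hA : A.IsHermitian) (g : n → ℝ) :
    (hA.eigenvectorUnitary : Matrix n n ℂ) * Matrix.diagonal (RCLike.ofReal ∘ g)
      * star (hA.eigenvectorUnitary : Matrix n n ℂ)
    = ∑ j, (g j : ℂ) • sproj hA j := by
  set U := (hA.eigenvectorUnitary : Matrix n n ℂ) with hU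
  ext k l
  rw [Matrix.mul_apply, Matrix.sum_apply]
  simp only [Matrix.mul_diagonal, Matrix.star_apply, Matrix.smul_apply, sproj,
    Matrix.of_apply, Function.comp_apply, smul_eq_mul]
  simp only [← hU]
  exact Finset.sum_congr rfl fun j _ => by rw [mul_comm (U k j), mul_assoc]; rfl

lemma cfc_eq_sum (hA : A.IsHermitian) (f : ℝ → ℝ) :
    hA.cfc f = ∑ j, ((f (hA.eigenvalues j) : ℝ) : ℂ) • sproj hA j := by
  rw [Matrix.IsHermitian.cfc, Unitary.conjStarAlgAut_apply, conj_diag_eq_sum hA (f ∘ hA.eigenvalues)]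
  rfl

lemma matrix_eq_sum (hA : A.IsHermitian) :
    A = ∑ j, ((hA.eigenvalues j : ℝ) : ℂ) • sproj hA j := by
  have h := hA.spectral_theorem
  rw [Unitary.conjStarAlgAut_apply, conj_diag_eq_sum hA hA.eigenvalues] at h
  exact h

lemma sum_sproj (hA : A.IsHermitian) : ∑ j, sproj hA j = 1 := by
  set U := (hA.eigenvectorUnitary : Matrix n n ℂ) with hU
  have h1 : U * star U = 1 := Matrix.mem_unitaryGroup_iff.mp (hA.eigenvectorUnitary).2
  ext k l
  have h2 := congrFun (congrFun h1 k) l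
  rw [Matrix.mul_apply] at h2
  simp only [Matrix.star_apply] at h2
  simp only [Matrix.sum_apply, sproj, Matrix.of_apply]
  exact h2

lemma sproj_bilin (hA : A.IsHermitian) (w v : n → ℂ) (j : n) :
    star w ⬝ᵥ (sproj hA j *ᵥ v)
      = star ((star (hA.eigenvectorUnitary : Matrix n n ℂ) *ᵥ w) j)
        * ((star (hA.eigenvectorUnitary : Matrix n n ℂ) *ᵥ v) j) := by
  set U := (hA.eigenvectorUnitary : Matrix n n ℂ)
  simp only [dotProduct, Matrix.mulVec, Matrix.star_apply, sproj, Matrix.of_apply,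
    Pi.star_apply, star_sum, star_mul', star_star, Finset.sum_mul, Finset.mul_sum]
  rw [Finset.sum_comm]
  refine Finset.sum_congr rfl fun l _ => Finset.sum_congr rfl fun k _ => by ring

lemma sproj_posSemidef (hA : A.IsHermitian) (j : n) : (sproj hA j).PosSemidef := by
  refine Matrix.PosSemidef.of_dotProduct_mulVec_nonneg ?_ ?_
  · ext k l
    simp [sproj, Matrix.conjTranspose_apply, mul_comm]
  · intro v
    rw [sproj_bilin]
    exact star_mul_self_nonneg _

lemma starU_mulVec (hA : A.IsHermitian) (d : n → ℂ) :
    star (hA.eigenvectorUnitary : Matrix n n ℂ) *ᵥ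
      ((hA.eigenvectorUnitary : Matrix n n ℂ) *ᵥ d) = d := by
  rw [Matrix.mulVec_mulVec, Unitary.coe_star_mul_self, Matrix.one_mulVec]

lemma dot_sum_mulVec {ι : Type*} [Fintype ι] (w v : n → ℂ) (M : ι → Matrix n n ℂ) :
    star w ⬝ᵥ ((∑ j, M j) *ᵥ v) = ∑ j, star w ⬝ᵥ (M j *ᵥ v) := by
  have hsum : (∑ j, M j) *ᵥ v = ∑ j, M j *ᵥ v := by
    ext k
    simp only [Matrix.mulVec, dotProduct, Matrix.sum_apply, Finset.sum_apply,
      Finset.sum_mul]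
    rw [Finset.sum_comm]
  rw [hsum]
  simp only [dotProduct, Finset.sum_apply, Finset.mul_sum]
  rw [Finset.sum_comm]

lemma parseval (hA : A.IsHermitian) (w v : n → ℂ) :
    star w ⬝ᵥ v
      = ∑ j, star ((star (hA.eigenvectorUnitary : Matrix n n ℂ) *ᵥ w) j)
          * ((star (hA.eigenvectorUnitary : Matrix n n ℂ) *ᵥ v) j) := by
  have h := dot_sum_mulVec w v (sproj hA)
  rw [sum_sproj hA, Matrix.one_mulVec] at h
  rw [h]
  exact Finset.sum_congr rfl fun j _ => sproj_bilin hA w v j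

/-- Cauchy–Schwarz for a positive semidefinite matrix. -/
lemma psd_cauchy_schwarz {B : Matrix n n ℂ} (hB : B.PosSemidef) (w v : n → ℂ) :
    ‖star w ⬝ᵥ (B *ᵥ v)‖ ≤
      Real.sqrt (star w ⬝ᵥ (B *ᵥ w)).re * Real.sqrt (star v ⬝ᵥ (B *ᵥ v)).re := by
  obtain ⟨L, rfl⟩ : ∃ L : Matrix n n ℂ, B = Lᴴ * L := by
    open scoped MatrixOrder Matrix.Norms.L2Operator in
    exact CStarAlgebra.nonneg_iff_eq_star_mul_self.mp hB.nonneg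
  have key : ∀ a b : n → ℂ, star a ⬝ᵥ ((Lᴴ * L) *ᵥ b) = star (L *ᵥ a) ⬝ᵥ (L *ᵥ b) := by
    intro a b
    rw [← Matrix.mulVec_mulVec, Matrix.star_mulVec, ← Matrix.dotProduct_mulVec]
  rw [key w v, key w w, key v v]
  set a : EuclideanSpace ℂ n := (WithLp.equiv 2 _).symm (L *ᵥ w)
  set b : EuclideanSpace ℂ n := (WithLp.equiv 2 _).symm (L *ᵥ v)
  have h1 : star (L *ᵥ w) ⬝ᵥ (L *ᵥ v) = inner (𝕜 := ℂ) a b :=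
    by rw [dotProduct_comm]; rfl
  have h2 : star (L *ᵥ w) ⬝ᵥ (L *ᵥ w) = inner (𝕜 := ℂ) a a :=
    by rw [dotProduct_comm]; rfl
  have h3 : star (L *ᵥ v) ⬝ᵥ (L *ᵥ v) = inner (𝕜 := ℂ) b b :=
    by rw [dotProduct_comm]; rfl
  rw [h1, h2, h3]
  calc ‖inner (𝕜 := ℂ) a b‖ ≤ ‖a‖ * ‖b‖ := norm_inner_le_norm a b
    _ = Real.sqrt (inner (𝕜 := ℂ) a a).re * Real.sqrt (inner (𝕜 := ℂ) b b).re := by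
        rw [@norm_eq_sqrt_re_inner ℂ, @norm_eq_sqrt_re_inner ℂ]
        rfl

lemma psd_re_nonneg {M : Matrix n n ℂ} (hM : M.PosSemidef) (v : n → ℂ) :
    0 ≤ (star v ⬝ᵥ (M *ᵥ v)).re := (Complex.nonneg_iff.mp (hM.dotProduct_mulVec_nonneg v)).1

lemma psd_coe_re {M : Matrix n n ℂ} (hM : M.PosSemidef) (v : n → ℂ) :
    star v ⬝ᵥ (M *ᵥ v) = (((star v ⬝ᵥ (M *ᵥ v)).re : ℝ) : ℂ) := by
  have h := (Complex.nonneg_iff.mp (hM.dotProduct_mulVec_nonneg v)).2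
  apply Complex.ext
  · simp
  · simp [← h]

lemma quad_sum {ι : Type*} [Fintype ι] (cs : ι → ℝ) (M : ι → Matrix n n ℂ) (w v : n → ℂ) :
    star w ⬝ᵥ ((∑ i, ((cs i : ℝ) : ℂ) • M i) *ᵥ v)
      = ∑ i, ((cs i : ℝ) : ℂ) * (star w ⬝ᵥ (M i *ᵥ v)) := by
  rw [dot_sum_mulVec]
  exact Finset.sum_congr rfl fun i _ => by
    rw [Matrix.smul_mulVec, dotProduct_smul, smul_eq_mul]

lemma isHermitian_sum_smul {ι : Type*} [Fintype ι] (cs : ι → ℝ) (M : ι → Matrix n n ℂ)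
    (h : ∀ i, (M i).IsHermitian) : (∑ i, ((cs i : ℝ) : ℂ) • M i).IsHermitian := by
  unfold Matrix.IsHermitian
  rw [Matrix.conjTranspose_sum]
  exact Finset.sum_congr rfl fun i _ => by
    rw [Matrix.conjTranspose_smul, h i, Complex.star_def, Complex.conj_ofReal]

end EtaJensen

open EtaJensen Matrix in
/-- Jensen's operator inequality for the entropy function: if `Φ` is a unital positive
linear map between matrix algebras, then `Φ(η(x)) ≤ η(Φ(x))` in the Loewner order for
every positive semidefinite `x`. -/
theorem eta_jensen_of_unital_positive
    {p q : Type*} [Fintype p] [DecidableEq p] [Fintype q] [DecidableEq q]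
    (Φ : Matrix p p ℂ →ₗ[ℂ] Matrix q q ℂ)
    (hΦ1 : Φ 1 = 1)
    (hΦpos : ∀ a : Matrix p p ℂ, a.PosSemidef → (Φ a).PosSemidef)
    (x : Matrix p p ℂ) (hx : x.PosSemidef) :
    (matFun eta (Φ x) - Φ (matFun eta x)).PosSemidef := by
  classical
  have hxH : x.IsHermitian := hx.1
  have hPSD : (Φ x).PosSemidef := hΦpos x hx
  have hAH : (Φ x).IsHermitian := hPSD.1
  simp only [matFun, dif_pos hxH, dif_pos hAH]
  set lam := hxH.eigenvalues with hlamdef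
  set nu := hAH.eigenvalues with hnudef
  have hlam0 : ∀ i, 0 ≤ lam i := hx.eigenvalues_nonneg
  have hnu0 : ∀ j, 0 ≤ nu j := hPSD.eigenvalues_nonneg
  set B : p → Matrix q q ℂ := fun i => Φ (sproj hxH i) with hBdef
  have hBpsd : ∀ i, (B i).PosSemidef := fun i => hΦpos _ (sproj_posSemidef hxH i)
  have hsumB : ∑ i, B i = 1 := by rw [← map_sum, sum_sproj, hΦ1]
  have hx_eq : Φ x = ∑ i, ((lam i : ℝ) : ℂ) • B i := by
    conv_lhs => rw [matrix_eq_sum hxH]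
    rw [map_sum]
    exact Finset.sum_congr rfl fun i _ => map_smul Φ _ _
  have heta_eq : Φ (hxH.cfc eta) = ∑ i, ((eta (lam i) : ℝ) : ℂ) • B i := by
    rw [cfc_eq_sum hxH eta, map_sum]
    exact Finset.sum_congr rfl fun i _ => map_smul Φ _ _
  refine Matrix.PosSemidef.of_dotProduct_mulVec_nonneg ?_ ?_
  · apply Matrix.IsHermitian.sub
    · rw [cfc_eq_sum hAH eta]
      exact isHermitian_sum_smul _ _ fun j => (sproj_posSemidef hAH j).1
    · rw [heta_eq]
      exact isHermitian_sum_smul _ _ fun i => (hBpsd i).1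
  · intro v
    rw [Matrix.sub_mulVec, dotProduct_sub]
    set bq : p → ℝ := fun i => (star v ⬝ᵥ (B i *ᵥ v)).re with hbq
    set qq : q → ℝ := fun j => (star v ⬝ᵥ (sproj hAH j *ᵥ v)).re with hqq
    have hL : star v ⬝ᵥ (hAH.cfc eta *ᵥ v) = ((∑ j, eta (nu j) * qq j : ℝ) : ℂ) := by
      rw [cfc_eq_sum hAH eta, quad_sum]
      push_cast
      exact Finset.sum_congr rfl fun j _ => by
        rw [psd_coe_re (sproj_posSemidef hAH j) v]
    have hR : star v ⬝ᵥ (Φ (hxH.cfc eta) *ᵥ v) = ((∑ i, eta (lam i) * bq i : ℝ) : ℂ) := by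
      rw [heta_eq, quad_sum]
      push_cast
      exact Finset.sum_congr rfl fun i _ => by
        rw [psd_coe_re (hBpsd i) v]
    rw [hL, hR, ← Complex.ofReal_sub, Complex.zero_le_real, sub_nonneg]
    apply scalar_key bq lam qq nu hlam0 hnu0
    · -- total mass
      have e1 : ((∑ i, bq i : ℝ) : ℂ) = star v ⬝ᵥ v := by
        push_cast
        rw [Finset.sum_congr rfl fun i (_ : i ∈ Finset.univ) => (psd_coe_re (hBpsd i) v).symm,
          ← dot_sum_mulVec, hsumB, Matrix.one_mulVec]
      have e2 : ((∑ j, qq j : ℝ) : ℂ) = star v ⬝ᵥ v := by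
        push_cast
        rw [Finset.sum_congr rfl
            fun j (_ : j ∈ Finset.univ) => (psd_coe_re (sproj_posSemidef hAH j) v).symm,
          ← dot_sum_mulVec, sum_sproj, Matrix.one_mulVec]
      exact_mod_cast e1.trans e2.symm
    · -- first moment
      have e1 : ((∑ i, lam i * bq i : ℝ) : ℂ) = star v ⬝ᵥ (Φ x *ᵥ v) := by
        rw [hx_eq, quad_sum]
        push_cast
        exact Finset.sum_congr rfl fun i _ => by rw [psd_coe_re (hBpsd i) v]
      have e2 : ((∑ j, nu j * qq j : ℝ) : ℂ) = star v ⬝ᵥ (Φ x *ᵥ v) := by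
        conv_rhs => rw [matrix_eq_sum hAH]
        rw [quad_sum]
        push_cast
        exact Finset.sum_congr rfl fun j _ => by
          rw [psd_coe_re (sproj_posSemidef hAH j) v]
      exact_mod_cast e1.trans e2.symm
    · -- key resolvent inequality
      intro s hs
      set g : q → ℝ := fun j => (nu j + s)⁻¹ with hgdef
      have hnus : ∀ j, 0 < nu j + s := fun j => by have := hnu0 j; linarith
      set cA : q → ℂ := star (hAH.eigenvectorUnitary : Matrix q q ℂ) *ᵥ v with hcA
      set d : q → ℂ := fun j => ((g j : ℝ) : ℂ) * cA j with hd
      set w : q → ℂ := (hAH.eigenvectorUnitary : Matrix q q ℂ) *ᵥ d with hw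
      have hdw : star (hAH.eigenvectorUnitary : Matrix q q ℂ) *ᵥ w = d := starU_mulVec hAH d
      have hq_eq : ∀ j, star (cA j) * cA j = ((qq j : ℝ) : ℂ) := by
        intro j
        rw [← sproj_bilin hAH v v j, psd_coe_re (sproj_posSemidef hAH j) v]
      have hWq : ∀ j, star w ⬝ᵥ (sproj hAH j *ᵥ w) = ((g j ^ 2 * qq j : ℝ) : ℂ) := by
        intro j
        rw [sproj_bilin hAH w w j, hdw]
        calc star (d j) * d j
            = (↑(g j) * ↑(g j)) * (star (cA j) * cA j) := by
              rw [hd]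
              simp only [star_mul', Complex.star_def, Complex.conj_ofReal]
              ring
          _ = (↑(g j) * ↑(g j)) * ((qq j : ℝ) : ℂ) := by rw [hq_eq j]
          _ = ((g j ^ 2 * qq j : ℝ) : ℂ) := by push_cast; ring
      set Qs : ℝ := ∑ j, qq j / (nu j + s) with hQs
      have hgq : ∀ j, g j * qq j = qq j / (nu j + s) := fun j => by
        rw [hgdef, inv_mul_eq_div]
      have hwv : star w ⬝ᵥ v = ((Qs : ℝ) : ℂ) := by
        rw [parseval hAH w v, hdw, ← hcA, hQs]
        push_cast
        refine Finset.sum_congr rfl fun j _ => ?_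
        calc star (d j) * cA j = ↑(g j) * (star (cA j) * cA j) := by
              rw [hd]
              simp only [star_mul', Complex.star_def, Complex.conj_ofReal]
              ring
          _ = ↑(g j) * ((qq j : ℝ) : ℂ) := by rw [hq_eq j]
          _ = ((qq j : ℝ) : ℂ) / (((nu j : ℝ) : ℂ) + ((s : ℝ) : ℂ)) := by
              rw [hgdef]; push_cast; ring
      set wb : p → ℝ := fun i => (star w ⬝ᵥ (B i *ᵥ w)).re with hwbdef
      have hwb0 : ∀ i, 0 ≤ wb i := fun i => psd_re_nonneg (hBpsd i) w
      have hmat : ∑ i, ((lam i + s : ℝ) : ℂ) • B i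
          = ∑ j, ((nu j + s : ℝ) : ℂ) • sproj hAH j := by
        have h1 : ∑ i, ((lam i + s : ℝ) : ℂ) • B i = Φ x + ((s : ℝ) : ℂ) • 1 := by
          rw [hx_eq, ← hsumB, Finset.smul_sum, ← Finset.sum_add_distrib]
          exact Finset.sum_congr rfl fun i _ => by rw [Complex.ofReal_add, add_smul]
        have h2 : ∑ j, ((nu j + s : ℝ) : ℂ) • sproj hAH j = Φ x + ((s : ℝ) : ℂ) • 1 := by
          conv_rhs => rw [matrix_eq_sum hAH, ← sum_sproj hAH]
          rw [Finset.smul_sum, ← Finset.sum_add_distrib]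
          exact Finset.sum_congr rfl fun j _ => by rw [Complex.ofReal_add, add_smul]
        rw [h1, h2]
      have hsum_wb : ∑ i, (lam i + s) * wb i = Qs := by
        have hEq : ∑ i, ((lam i + s : ℝ) : ℂ) * (star w ⬝ᵥ (B i *ᵥ w))
            = ∑ j, ((nu j + s : ℝ) : ℂ) * (star w ⬝ᵥ (sproj hAH j *ᵥ w)) := by
          rw [← quad_sum, ← quad_sum, hmat]
        have hEq2 : ∑ i, ((lam i + s : ℝ) : ℂ) * (star w ⬝ᵥ (B i *ᵥ w))
            = ∑ j, ((nu j + s : ℝ) : ℂ) * (((g j ^ 2 * qq j : ℝ)) : ℂ) :=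
          hEq.trans (Finset.sum_congr rfl fun j _ => by rw [hWq j])
        have hre := congrArg Complex.re hEq2
        rw [Complex.re_sum, Complex.re_sum] at hre
        simp only [Complex.re_ofReal_mul] at hre
        calc ∑ i, (lam i + s) * wb i
            = ∑ j, (nu j + s) * (((g j ^ 2 * qq j : ℝ) : ℂ)).re := hre
          _ = Qs := by
              rw [hQs]
              refine Finset.sum_congr rfl fun j _ => ?_
              rw [Complex.ofReal_re, hgdef]
              have := (hnus j).ne'
              field_simp
      have hQs0 : 0 ≤ Qs := by
        refine Finset.sum_nonneg fun j _ => div_nonneg ?_ (hnus j).le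
        exact psd_re_nonneg (sproj_posSemidef hAH j) v
      set R : ℝ := ∑ i, bq i / (lam i + s) with hR
      have hlams : ∀ i, 0 < lam i + s := fun i => by have := hlam0 i; linarith
      have hR0 : 0 ≤ R := Finset.sum_nonneg fun i _ =>
        div_nonneg (psd_re_nonneg (hBpsd i) v) (hlams i).le
      have hchain : Qs ≤ Real.sqrt Qs * Real.sqrt R := by
        calc Qs = (((Qs : ℝ) : ℂ)).re := (Complex.ofReal_re _).symm
          _ = (star w ⬝ᵥ v).re := by rw [hwv]
          _ = (∑ i, star w ⬝ᵥ (B i *ᵥ v)).re := by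
              rw [← dot_sum_mulVec, hsumB, Matrix.one_mulVec]
          _ = ∑ i, (star w ⬝ᵥ (B i *ᵥ v)).re := by rw [Complex.re_sum]
          _ ≤ ∑ i, ‖star w ⬝ᵥ (B i *ᵥ v)‖ := by
              refine Finset.sum_le_sum fun i _ => ?_
              exact Complex.re_le_norm _
          _ ≤ ∑ i, Real.sqrt (wb i) * Real.sqrt (bq i) := by
              refine Finset.sum_le_sum fun i _ => ?_
              exact psd_cauchy_schwarz (hBpsd i) w v
          _ = ∑ i, Real.sqrt ((lam i + s) * wb i) * Real.sqrt (bq i / (lam i + s)) := by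
              refine Finset.sum_congr rfl fun i _ => ?_
              rw [Real.sqrt_mul (hlams i).le, Real.sqrt_div' (bq i) (hlams i).le]
              have hs1 : Real.sqrt (lam i + s) ≠ 0 :=
                Real.sqrt_ne_zero'.mpr (hlams i)
              field_simp
          _ ≤ Real.sqrt (∑ i, (lam i + s) * wb i) * Real.sqrt (∑ i, bq i / (lam i + s)) :=
              Real.sum_sqrt_mul_sqrt_le _
                (fun i => mul_nonneg (hlams i).le (hwb0 i))
                (fun i => div_nonneg (psd_re_nonneg (hBpsd i) v) (hlams i).le)
          _ = Real.sqrt Qs * Real.sqrt R := by rw [hsum_wb]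
      have : Qs ≤ R := by
        nlinarith [Real.sq_sqrt hQs0, Real.sq_sqrt hR0, Real.sqrt_nonneg Qs,
          Real.sqrt_nonneg R, sq_nonneg (Real.sqrt Qs - Real.sqrt R)]
      exact this
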